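/- For every nonzero t ∈ Λ²V, the K-subspace T := {x ∈ V | x ∧ t = 0} of V satisfies finrank T ∈ {0, 2}; moreover finrank T = 2 if and only if t is decomposable, i.e. t = q ∧ r for some q, r ∈ V. -/

import Mathlib

open TensorProduct ExteriorAlgebra

section Aux
variable {K V : Type*} [Field K] [AddCommGroup V] [Module K V]

lemma aux_iotaMulti_two (q r : V) :
    ExteriorAlgebra.ιMulti K 2 ![q, r] = ι K q * ι K r := by
  simp [ExteriorAlgebra.ιMulti_apply, List.ofFn_succ]

lemma aux_iotaMulti_three (p q r : V) :
    ExteriorAlgebra.ιMulti K 3 ![p, q, r] = ι K p * (ι K q * ι K r) := by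
  simp [ExteriorAlgebra.ιMulti_apply, List.ofFn_succ, mul_assoc]

lemma aux_anticomm (q r : V) : ι K r * ι K q = -(ι K q * ι K r) := by
  have h0 := ExteriorAlgebra.ι_sq_zero (R := K) (M := V) (q + r)
  rw [map_add, add_mul, mul_add, mul_add, ExteriorAlgebra.ι_sq_zero,
    ExteriorAlgebra.ι_sq_zero, zero_add, add_zero] at h0
  exact eq_neg_of_add_eq_zero_left (by rw [add_comm]; exact h0)

lemma aux_exists_dual {n : ℕ} (v : Fin n → V) (hv : LinearIndependent K v) :
    ∃ f : Fin n → (V →ₗ[K] K), ∀ i j, f i (v j) = if j = i then 1 else 0 := by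
  have h1 : LinearIndepOn K id (Set.range v) := hv.linearIndepOn_id
  let b := Module.Basis.extend h1
  have hmem : ∀ i, v i ∈ h1.extend (Set.subset_univ _) := fun i =>
    h1.subset_extend _ ⟨i, rfl⟩
  refine ⟨fun i => b.coord ⟨v i, hmem i⟩, fun i j => ?_⟩
  have hb : b ⟨v j, hmem j⟩ = v j := Module.Basis.extend_apply_self h1 _
  rw [Module.Basis.coord_apply, ← hb, Module.Basis.repr_self]
  classical
  rw [Finsupp.single_apply]
  simp [Subtype.ext_iff, hv.injective.eq_iff]

lemma aux_iotaMulti_ne_zero {n : ℕ} (v : Fin n → V) (hv : LinearIndependent K v) :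
    ExteriorAlgebra.ιMulti K n v ≠ 0 := by
  obtain ⟨f, hf⟩ := aux_exists_dual v hv
  set Φ : V [⋀^Fin n]→ₗ[K] K :=
    Matrix.detRowAlternating.compLinearMap (LinearMap.pi f) with hΦ
  intro h
  have h2 := congrArg (ExteriorAlgebra.liftAlternating (Function.update 0 n Φ)) h
  rw [ExteriorAlgebra.liftAlternating_apply_ιMulti, map_zero, Function.update_self] at h2
  have h3 : Φ v = 1 := by
    have h1 : (Matrix.of fun j i => f i (v j)) = (1 : Matrix (Fin n) (Fin n) K) := by
      ext j i
      simp [Matrix.one_apply, hf i j, eq_comm]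
    show (Matrix.of fun j i => f i (v j)).det = 1
    rw [h1, Matrix.det_one]
  rw [h2] at h3
  exact one_ne_zero h3.symm

lemma aux_decomp (x : V) (hx : x ≠ 0) (tv : ExteriorAlgebra K V) (htv : tv ∈ ⋀[K]^2 V)
    (h : ι K x * tv = 0) : ∃ y : V, tv = ι K x * ι K y := by
  classical
  have hli1 : LinearIndependent K ![x] := linearIndependent_unique_iff.mpr (by simpa using hx)
  obtain ⟨f, hf⟩ := aux_exists_dual ![x] hli1
  set ξ : V →ₗ[K] K := f 0 with hξ
  have hξx : ξ x = 1 := by simpa using hf 0 0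
  have hc := congrArg (CliffordAlgebra.contractLeft (Q := (0 : QuadraticForm K V)) ξ) h
  rw [map_zero, CliffordAlgebra.contractLeft_ι_mul, hξx, one_smul] at hc
  set c : ExteriorAlgebra K V := CliffordAlgebra.contractLeft ξ tv with hcdef
  have htc : tv = ι K x * c := by
    have := sub_eq_zero.mp hc
    exact this
  set 𝒜 : ℕ → Submodule K (ExteriorAlgebra K V) := fun n => ⋀[K]^n V with h𝒜
  have hproj := congrArg (GradedAlgebra.proj 𝒜 2) htc
  rw [GradedAlgebra.proj_apply, DirectSum.decompose_of_mem_same 𝒜 htv] at hproj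
  have hsum : (ι K x * c) = ∑ n ∈ (DirectSum.decompose 𝒜 c).support,
      ι K x * (DirectSum.decompose 𝒜 c n : ExteriorAlgebra K V) := by
    rw [← Finset.mul_sum, DirectSum.sum_support_decompose 𝒜 c]
  rw [hsum, map_sum] at hproj
  have hx1 : ι K x ∈ 𝒜 1 := by
    simpa [h𝒜, pow_one] using LinearMap.mem_range_self (ι K (M := V)) x
  have hterm : ∀ n ∈ (DirectSum.decompose 𝒜 c).support,
      GradedAlgebra.proj 𝒜 2 (ι K x * (DirectSum.decompose 𝒜 c n : ExteriorAlgebra K V)) =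
      if n = 1 then ι K x * (DirectSum.decompose 𝒜 c n : ExteriorAlgebra K V) else 0 := by
    intro n _
    have hmem : ι K x * (DirectSum.decompose 𝒜 c n : ExteriorAlgebra K V) ∈ 𝒜 (1 + n) :=
      SetLike.mul_mem_graded hx1 (SetLike.coe_mem _)
    by_cases hn : n = 1
    · subst hn
      rw [if_pos rfl, GradedAlgebra.proj_apply, DirectSum.decompose_of_mem_same 𝒜 hmem]
    · rw [if_neg hn, GradedAlgebra.proj_apply,
        DirectSum.decompose_of_mem_ne 𝒜 hmem (by omega)]
  rw [Finset.sum_congr rfl hterm, Finset.sum_ite_eq' _ 1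
    (fun n => ι K x * (DirectSum.decompose 𝒜 c n : ExteriorAlgebra K V))] at hproj
  by_cases h1 : (1 : ℕ) ∈ (DirectSum.decompose 𝒜 c).support
  · rw [if_pos h1] at hproj
    have hc1 : (DirectSum.decompose 𝒜 c 1 : ExteriorAlgebra K V) ∈
        LinearMap.range (ι K (M := V)) := by
      have h5 : 𝒜 1 = LinearMap.range (ι K (M := V)) := pow_one _
      rw [← h5]
      exact SetLike.coe_mem _
    obtain ⟨y, hy⟩ := hc1
    exact ⟨y, by rw [hproj, hy]⟩
  · rw [if_neg h1] at hproj
    exact ⟨0, by rw [hproj, map_zero, mul_zero]⟩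
end Aux

variable (K V : Type*) [Field K] [AddCommGroup V] [Module K V]

/-- The wedge `q ∧ r` of two vectors, as an element of the second exterior power. -/
def wedge2 (q r : V) : ⋀[K]^2 V :=
  ⟨ExteriorAlgebra.ιMulti K 2 ![q, r],
    ExteriorAlgebra.ιMulti_range K 2 (Set.mem_range_self _)⟩

/-- The wedge `p ∧ q ∧ r` of three vectors, as an element of the third exterior power. -/
def wedge3 (p q r : V) : ⋀[K]^3 V :=
  ⟨ExteriorAlgebra.ιMulti K 3 ![p, q, r],
    ExteriorAlgebra.ιMulti_range K 3 (Set.mem_range_self _)⟩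

lemma aux_w_val (w : V →ₗ[K] ↥(⋀[K]^2 V) →ₗ[K] ↥(⋀[K]^3 V))
    (hw : ∀ p q r : V, w p (wedge2 K V q r) = wedge3 K V p q r)
    (x : V) (s : ⋀[K]^2 V) :
    ((w x s : ⋀[K]^3 V) : ExteriorAlgebra K V) = ι K x * (s : ExteriorAlgebra K V) := by
  have key : ∀ z, z ∈ Submodule.span K (Set.range (ExteriorAlgebra.ιMulti K 2 (M := V))) →
      ∀ hz : z ∈ ⋀[K]^2 V,
      ((w x ⟨z, hz⟩ : ⋀[K]^3 V) : ExteriorAlgebra K V) = ι K x * z := by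
    intro z hz'
    induction hz' using Submodule.span_induction with
    | mem u hu =>
      intro hz
      obtain ⟨v, rfl⟩ := hu
      have hv : v = ![v 0, v 1] := by funext i; fin_cases i <;> rfl
      have h1 : (⟨ExteriorAlgebra.ιMulti K 2 v, hz⟩ : ⋀[K]^2 V) =
          wedge2 K V (v 0) (v 1) := by
        apply Subtype.ext
        show ExteriorAlgebra.ιMulti K 2 v = ExteriorAlgebra.ιMulti K 2 ![v 0, v 1]
        exact congrArg _ hv
      rw [h1, hw]
      show (ExteriorAlgebra.ιMulti K 3 ![x, v 0, v 1] : ExteriorAlgebra K V) = _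
      rw [aux_iotaMulti_three, ← aux_iotaMulti_two]
      exact congrArg _ (congrArg _ hv.symm)
    | zero =>
      intro hz
      have h0 : (⟨(0 : ExteriorAlgebra K V), hz⟩ : ⋀[K]^2 V) = 0 := rfl
      rw [h0, map_zero, mul_zero]
      rfl
    | add z1 z2 hm1 hm2 ih1 ih2 =>
      intro hz
      have hz1 : z1 ∈ ⋀[K]^2 V := by
        rw [← ExteriorAlgebra.ιMulti_span_fixedDegree]; exact hm1
      have hz2 : z2 ∈ ⋀[K]^2 V := by
        rw [← ExteriorAlgebra.ιMulti_span_fixedDegree]; exact hm2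
      have hadd : (⟨z1 + z2, hz⟩ : ⋀[K]^2 V) = ⟨z1, hz1⟩ + ⟨z2, hz2⟩ := rfl
      rw [hadd, map_add, Submodule.coe_add, ih1 hz1, ih2 hz2, mul_add]
    | smul a z1 hm1 ih =>
      intro hz
      have hz1 : z1 ∈ ⋀[K]^2 V := by
        rw [← ExteriorAlgebra.ιMulti_span_fixedDegree]; exact hm1
      have hsmul : (⟨a • z1, hz⟩ : ⋀[K]^2 V) = a • ⟨z1, hz1⟩ := rfl
      rw [hsmul, map_smul, Submodule.coe_smul, ih hz1, mul_smul_comm]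
  obtain ⟨z, hz⟩ := s
  exact key z (by rwa [ExteriorAlgebra.ιMulti_span_fixedDegree]) hz

/-- For nonzero `t ∈ Λ²V`, the subspace `T = {x ∈ V | x ∧ t = 0}` has dimension `0` or
`2`, and it has dimension `2` exactly when `t` is decomposable. Here the wedge
`V × Λ²V → Λ³V` is given as a bilinear map `w` with `w x (q ∧ r) = x ∧ q ∧ r`. -/
theorem finrank_wedge_kernel
    (hV : Module.finrank K V = 4)
    (w : V →ₗ[K] ↥(⋀[K]^2 V) →ₗ[K] ↥(⋀[K]^3 V))
    (hw : ∀ p q r : V, w p (wedge2 K V q r) = wedge3 K V p q r)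
    (t : ⋀[K]^2 V) (ht : t ≠ 0) :
    Module.finrank K (LinearMap.ker (w.flip t)) ∈ ({0, 2} : Set ℕ) ∧
    (Module.finrank K (LinearMap.ker (w.flip t)) = 2 ↔
      ∃ q r : V, t = wedge2 K V q r) := by
  classical
  set T := LinearMap.ker (w.flip t) with hT
  have htv0 : (t : ExteriorAlgebra K V) ≠ 0 := by
    intro h
    exact ht (by exact_mod_cast Subtype.ext h)
  have hmemT : ∀ z : V, z ∈ T ↔ ι K z * (t : ExteriorAlgebra K V) = 0 := by
    intro z
    rw [hT, LinearMap.mem_ker, ← Submodule.coe_eq_zero, LinearMap.flip_apply,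
      aux_w_val K V w hw z t]
  have hB : ∀ q r : V, (t : ExteriorAlgebra K V) = ι K q * ι K r →
      T = Submodule.span K (Set.range ![q, r]) ∧ LinearIndependent K ![q, r] := by
    intro q r hqr
    have hne : ι K q * ι K r ≠ 0 := hqr ▸ htv0
    have hli : LinearIndependent K ![q, r] := by
      rw [LinearIndependent.pair_iff]
      intro s u hsu
      by_contra hcon
      by_cases hu : u = 0
      · subst hu
        have hs : s ≠ 0 := fun h => hcon ⟨h, rfl⟩
        rw [zero_smul, add_zero] at hsu
        have hq : q = 0 := by
          rcases smul_eq_zero.mp hsu with h | h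
          · exact absurd h hs
          · exact h
        exact hne (by rw [hq, map_zero, zero_mul])
      · have hr : u • r = -(s • q) := eq_neg_of_add_eq_zero_right hsu
        have h2 : u • (ι K q * ι K r) = 0 := by
          have h3 : ι K q * ι K (u • r) = ι K q * ι K (-(s • q)) := by rw [hr]
          simpa [mul_smul_comm, ExteriorAlgebra.ι_sq_zero] using h3
        rcases smul_eq_zero.mp h2 with h | h
        · exact hu h
        · exact hne h
    refine ⟨le_antisymm ?_ ?_, hli⟩
    · intro z hz
      by_contra hzspan
      have hli3 : LinearIndependent K ![z, q, r] :=
        linearIndependent_fin_cons.mpr ⟨hli, hzspan⟩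
      apply aux_iotaMulti_ne_zero _ hli3
      rw [aux_iotaMulti_three]
      have h4 := (hmemT z).mp hz
      rwa [hqr] at h4
    · rw [Submodule.span_le]
      rintro _ ⟨i, rfl⟩
      fin_cases i
      · rw [SetLike.mem_coe]
        rw [hmemT, hqr]
        show ι K q * (ι K q * ι K r) = 0
        rw [← mul_assoc, ExteriorAlgebra.ι_sq_zero, zero_mul]
      · rw [SetLike.mem_coe]
        rw [hmemT, hqr]
        show ι K r * (ι K q * ι K r) = 0
        rw [← mul_assoc, aux_anticomm, neg_mul, mul_assoc,
          ExteriorAlgebra.ι_sq_zero, mul_zero, neg_zero]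
  have hqmem : ∀ q r : V, (t : ExteriorAlgebra K V) = ι K q * ι K r → q ∈ T := by
    intro q r hqr
    rw [hmemT, hqr, ← mul_assoc, ExteriorAlgebra.ι_sq_zero, zero_mul]
  by_cases hbot : T = ⊥
  · have hfr : Module.finrank K T = 0 := by rw [hbot, finrank_bot]
    have hnodec : ¬ ∃ q r : V, t = wedge2 K V q r := by
      rintro ⟨q, r, hqr⟩
      have hval : (t : ExteriorAlgebra K V) = ι K q * ι K r := by
        rw [hqr]
        exact aux_iotaMulti_two q r
      have hq0 : q ≠ 0 := by
        intro h
        exact htv0 (by rw [hval, h, map_zero, zero_mul])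
      have := hqmem q r hval
      rw [hbot, Submodule.mem_bot] at this
      exact hq0 this
    refine ⟨by rw [hfr]; exact Or.inl rfl, ?_⟩
    constructor
    · intro h2; rw [hfr] at h2; exact absurd h2 (by norm_num)
    · intro h; exact absurd h hnodec
  · obtain ⟨x, hxT, hx0⟩ := Submodule.exists_mem_ne_zero_of_ne_bot hbot
    have hxt : ι K x * (t : ExteriorAlgebra K V) = 0 := (hmemT x).mp hxT
    obtain ⟨y, hy⟩ := aux_decomp x hx0 _ t.2 hxt
    obtain ⟨hTspan, hli⟩ := hB x y hy
    have hfr : Module.finrank K T = 2 := by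
      rw [hTspan, finrank_span_eq_card hli, Fintype.card_fin]
    refine ⟨by rw [hfr]; exact Or.inr rfl, ?_⟩
    constructor
    · intro _
      refine ⟨x, y, Subtype.ext ?_⟩
      show (t : ExteriorAlgebra K V) = ExteriorAlgebra.ιMulti K 2 ![x, y]
      rw [aux_iotaMulti_two]
      exact hy
    · intro _; exact hfr
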